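/- (Linear independence of the inputs is necessary when the outputs are linearly independent.) Let H and H₂ be finite-dimensional complex inner product spaces, φ_1,…,φ_n ∈ H unit vectors with Gram matrix X, and ψ_1,…,ψ_n ∈ H₂ linearly independent unit vectors with Gram matrix Y. Let η_1,…,η_n > 0 and let A be an n×n complex positive semidefinite matrix with A_{ii} = 1 for all i. If the matrix with entries X_{ij} − √(η_i η_j) Y_{ij} A_{ij} is positive semidefinite, then X is positive definite; in particular φ_1,…,φ_n are linearly independent. -/

import Mathlib

open scoped ComplexOrder

open Finset Matrix

section aux
variable {n : ℕ} {H : Type*} [NormedAddCommGroup H] [InnerProductSpace ℂ H]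

lemma gram_quadform (v : Fin n → H) (x : Fin n → ℂ) :
    star x ⬝ᵥ (Matrix.of fun i j => (inner ℂ (v i) (v j) : ℂ)) *ᵥ x
      = inner ℂ (∑ i, x i • v i) (∑ i, x i • v i) := by
  simp only [dotProduct, Matrix.mulVec, Matrix.of_apply, Pi.star_apply, RCLike.star_def,
    sum_inner, inner_sum, inner_smul_left, inner_smul_right, Finset.mul_sum]
  rw [Finset.sum_comm]
  exact Finset.sum_congr rfl fun i _ => Finset.sum_congr rfl fun j _ => by ring

lemma gram_hermitian (v : Fin n → H) :
    (Matrix.of fun i j => (inner ℂ (v i) (v j) : ℂ)).IsHermitian := by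
  ext i j
  simp [Matrix.conjTranspose_apply, inner_conj_symm]

lemma gram_posSemidef (v : Fin n → H) :
    (Matrix.of fun i j => (inner ℂ (v i) (v j) : ℂ)).PosSemidef := by
  refine Matrix.PosSemidef.of_dotProduct_mulVec_nonneg (gram_hermitian v) fun x => ?_
  rw [gram_quadform]
  rw [inner_self_eq_norm_sq_to_K]
  norm_cast
  exact Complex.zero_le_real.mpr (sq_nonneg _)

lemma gram_posDef_of_li {v : Fin n → H} (hv : LinearIndependent ℂ v) :
    (Matrix.of fun i j => (inner ℂ (v i) (v j) : ℂ)).PosDef := by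
  refine Matrix.PosDef.of_dotProduct_mulVec_pos (gram_hermitian v) fun x hx => ?_
  rw [gram_quadform, inner_self_eq_norm_sq_to_K]
  have hu : (∑ i, x i • v i) ≠ 0 := by
    intro h
    exact hx (funext fun i => Fintype.linearIndependent_iff.mp hv x h i)
  have h1 : 0 < ‖∑ i, x i • v i‖ := norm_pos_iff.mpr hu
  norm_cast
  exact Complex.zero_lt_real.mpr (pow_pos h1 2)

lemma gram_li_of_posDef {v : Fin n → H}
    (hv : (Matrix.of fun i j => (inner ℂ (v i) (v j) : ℂ)).PosDef) :
    LinearIndependent ℂ v := by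
  rw [Fintype.linearIndependent_iff]
  intro x hx
  by_contra h
  push_neg at h
  obtain ⟨i, hi⟩ := h
  have hxne : x ≠ 0 := fun h0 => hi (by simp [h0])
  have := hv.dotProduct_mulVec_pos hxne
  rw [gram_quadform, hx, inner_zero_left] at this
  exact lt_irrefl _ this

end aux

/-- linear independence of the inputs is necessary when the
outputs are linearly independent. If the output unit vectors `ψᵢ` are linearly
independent, the success probabilities `ηᵢ` are all positive, `A` is positive
semidefinite with unit diagonal, and the matrix with entries
`Xᵢⱼ − √(ηᵢ ηⱼ) Yᵢⱼ Aᵢⱼ` is positive semidefinite (where `X`, `Y` are the Gram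
matrices of the inputs and outputs), then `X` is positive definite; in particular
the input vectors `φᵢ` are linearly independent. -/
theorem inputs_linearIndependent_of_outputs_linearIndependent {n : ℕ}
    {H H₂ : Type*}
    [NormedAddCommGroup H] [InnerProductSpace ℂ H] [FiniteDimensional ℂ H]
    [NormedAddCommGroup H₂] [InnerProductSpace ℂ H₂] [FiniteDimensional ℂ H₂]
    (φ : Fin n → H) (ψ : Fin n → H₂)
    (hφ : ∀ i, ‖φ i‖ = 1) (hψ : ∀ i, ‖ψ i‖ = 1)
    (hψli : LinearIndependent ℂ ψ)
    (η : Fin n → ℝ) (hη : ∀ i, 0 < η i)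
    (A : Matrix (Fin n) (Fin n) ℂ) (hA : A.PosSemidef) (hA1 : ∀ i, A i i = 1)
    (hpsd : (Matrix.of fun i j =>
        (inner ℂ (φ i) (φ j) : ℂ)
          - (Real.sqrt (η i * η j) : ℂ) * (inner ℂ (ψ i) (ψ j) : ℂ)
              * A i j).PosSemidef) :
    (Matrix.of fun i j => (inner ℂ (φ i) (φ j) : ℂ)).PosDef
      ∧ LinearIndependent ℂ φ := by
  classical
  set Y : Matrix (Fin n) (Fin n) ℂ := Matrix.of fun i j => (inner ℂ (ψ i) (ψ j) : ℂ) with hYdef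
  have hYd : Y.PosDef := gram_posDef_of_li hψli
  obtain ⟨B, hB⟩ := by
    open scoped MatrixOrder in exact CStarAlgebra.nonneg_iff_eq_star_mul_self.mp hA.nonneg
  have hAB : ∀ i j, A i j = ∑ k, star (B k i) * B k j := fun i j => by
    rw [hB, Matrix.mul_apply]
    simp [Matrix.conjTranspose_apply, Matrix.star_eq_conjTranspose]
  have hAc : ∀ i j : Fin n, (starRingEnd ℂ) (A j i) = A i j := fun i j => hA.1.apply i j
  set c : Fin n → ℝ := fun i => Real.sqrt (η i) with hcdef
  have hc : ∀ i, 0 < c i := fun i => Real.sqrt_pos.mpr (hη i)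
  have hsplit : ∀ i j, (Real.sqrt (η i * η j) : ℂ) = (c i : ℂ) * (c j : ℂ) := fun i j => by
    rw [hcdef]
    rw [Real.sqrt_mul (hη i).le]
    push_cast
    ring
  set M : Matrix (Fin n) (Fin n) ℂ :=
    Matrix.of fun i j => (Real.sqrt (η i * η j) : ℂ) * (inner ℂ (ψ i) (ψ j) : ℂ) * A i j
    with hMdef
  have hMherm : M.IsHermitian := by
    ext i j
    simp only [hMdef, Matrix.conjTranspose_apply, Matrix.of_apply, star_mul', Complex.star_def,
      Complex.conj_ofReal, inner_conj_symm, hAc, mul_comm (η j) (η i)]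
  have hMpd : M.PosDef := by
    refine Matrix.PosDef.of_dotProduct_mulVec_pos hMherm fun x hx => ?_
    set z : Fin n → Fin n → ℂ := fun k i => x i * (c i : ℂ) * B k i with hzdef
    have key : star x ⬝ᵥ M *ᵥ x = ∑ k, star (z k) ⬝ᵥ Y *ᵥ z k := by
      simp only [dotProduct, Matrix.mulVec, Matrix.of_apply, Pi.star_apply,
        Finset.mul_sum, hMdef, hYdef, hzdef]
      have e1 : ∀ i j, star (x i) * ((Real.sqrt (η i * η j) : ℂ)
          * (inner ℂ (ψ i) (ψ j) : ℂ) * A i j * x j)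
          = ∑ k, star (x i * (c i : ℂ) * B k i)
              * ((inner ℂ (ψ i) (ψ j) : ℂ) * (x j * (c j : ℂ) * B k j)) := by
        intro i j
        rw [hsplit, hAB]
        simp only [Finset.mul_sum, Finset.sum_mul]
        refine Finset.sum_congr rfl fun k _ => ?_
        simp only [star_mul', Complex.star_def, Complex.conj_ofReal]
        ring
      calc ∑ i, ∑ j, star (x i)
              * ((Real.sqrt (η i * η j) : ℂ) * (inner ℂ (ψ i) (ψ j) : ℂ) * A i j * x j)
          = ∑ i, ∑ j, ∑ k, star (x i * (c i : ℂ) * B k i)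
              * ((inner ℂ (ψ i) (ψ j) : ℂ) * (x j * (c j : ℂ) * B k j)) := by
            exact Finset.sum_congr rfl fun i _ => Finset.sum_congr rfl fun j _ => e1 i j
        _ = ∑ i, ∑ k, ∑ j, star (x i * (c i : ℂ) * B k i)
              * ((inner ℂ (ψ i) (ψ j) : ℂ) * (x j * (c j : ℂ) * B k j)) := by
            exact Finset.sum_congr rfl fun i _ => Finset.sum_comm
        _ = ∑ k, ∑ i, ∑ j, star (x i * (c i : ℂ) * B k i)
              * ((inner ℂ (ψ i) (ψ j) : ℂ) * (x j * (c j : ℂ) * B k j)) := Finset.sum_comm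
    rw [key]
    obtain ⟨i0, hi0⟩ := Function.ne_iff.mp hx
    have hB0 : ∃ k, B k i0 ≠ 0 := by
      by_contra h
      push_neg at h
      have := hAB i0 i0
      rw [hA1 i0] at this
      simp [h] at this
    obtain ⟨k0, hk0⟩ := hB0
    have hz0 : z k0 ≠ 0 := by
      intro h
      have : z k0 i0 = 0 := by rw [h]; rfl
      rw [hzdef] at this
      simp only at this
      exact (mul_ne_zero (mul_ne_zero hi0 (by exact_mod_cast (hc i0).ne')) hk0) this
    exact Finset.sum_pos' (fun k _ => hYd.posSemidef.dotProduct_mulVec_nonneg (z k))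
      ⟨k0, Finset.mem_univ _, hYd.dotProduct_mulVec_pos hz0⟩
  have hXpd : (Matrix.of fun i j => (inner ℂ (φ i) (φ j) : ℂ)).PosDef := by
    refine Matrix.PosDef.of_dotProduct_mulVec_pos (gram_hermitian φ) fun x hx => ?_
    have hsum : (Matrix.of fun i j => (inner ℂ (φ i) (φ j) : ℂ))
        = (Matrix.of fun i j =>
            (inner ℂ (φ i) (φ j) : ℂ)
              - (Real.sqrt (η i * η j) : ℂ) * (inner ℂ (ψ i) (ψ j) : ℂ) * A i j) + M := by
      ext i j
      simp only [Matrix.add_apply, Matrix.of_apply, hMdef]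
      ring
    rw [hsum, Matrix.add_mulVec, dotProduct_add]
    exact add_pos_of_nonneg_of_pos (hpsd.dotProduct_mulVec_nonneg x) (hMpd.dotProduct_mulVec_pos hx)
  exact ⟨hXpd, gram_li_of_posDef hXpd⟩
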